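/- Let |φ₀⟩, |φ₁⟩ be unit vectors in a finite-dimensional complex Hilbert space with |⟨φ₀|φ₁⟩| = cos θ, p ∈ [0,1], and ρ = p·|φ₀⟩⟨φ₀| + (1-p)·|φ₁⟩⟨φ₁|. Then the von Neumann entropy of ρ (in bits) satisfies S(ρ) ≤ 2·√(p(1-p))·sin θ = 2·√(p(1-p)·(1 - |⟨φ₀|φ₁⟩|²)). -/

import Mathlib

noncomputable def Gfun (x : ℝ) : ℝ :=
  2 * Real.log 2 * Real.sqrt (x*(1-x)) + x * Real.log x + (1-x) * Real.log (1-x)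

noncomputable def Gfun' (x : ℝ) : ℝ :=
  Real.log 2 * (1-2*x) / Real.sqrt (x*(1-x)) + (Real.log x - Real.log (1-x))

noncomputable def Gfun'' (x : ℝ) : ℝ :=
  (2 * Real.sqrt (x*(1-x)) - Real.log 2) / (2 * Real.sqrt (x*(1-x)) * (x*(1-x)))

lemma Gfun_cont : Continuous Gfun := by
  unfold Gfun
  have h1 : Continuous fun x : ℝ => x * Real.log x := Real.continuous_mul_log
  exact ((continuous_const.mul (Real.continuous_sqrt.comp (continuous_id.mul
    (continuous_const.sub continuous_id)))).add h1).add
    (h1.comp (continuous_const.sub continuous_id))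

lemma Gfun_hasDeriv {x : ℝ} (hx0 : 0 < x) (hx1 : x < 1) : HasDerivAt Gfun (Gfun' x) x := by
  have hu : 0 < x * (1-x) := by nlinarith
  have hsu : 0 < Real.sqrt (x*(1-x)) := Real.sqrt_pos.mpr hu
  have h1 : HasDerivAt (fun x : ℝ => x*(1-x)) (1-2*x) x := by
    have := (hasDerivAt_id x).mul ((hasDerivAt_const x (1:ℝ)).sub (hasDerivAt_id x))
    exact this.congr_deriv (by simp only [id, Pi.sub_apply]; ring)
  have h2 : HasDerivAt (fun x : ℝ => Real.sqrt (x*(1-x))) ((1-2*x)/(2*Real.sqrt (x*(1-x)))) x :=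
    h1.sqrt hu.ne'
  have h3 : HasDerivAt (fun x : ℝ => x * Real.log x) (Real.log x + 1) x :=
    Real.hasDerivAt_mul_log hx0.ne'
  have h4 : HasDerivAt (fun x : ℝ => 1 - x) (-1) x := by
    exact (hasDerivAt_id x).const_sub 1
  have h5 : HasDerivAt (fun x : ℝ => (1-x) * Real.log (1-x)) ((Real.log (1-x) + 1) * (-1)) x := by
    have := (Real.hasDerivAt_mul_log (x := 1-x) (by linarith)).comp x h4
    exact this
  have := ((h2.const_mul (2 * Real.log 2)).add h3).add h5
  refine this.congr_deriv ?_
  symm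
  unfold Gfun'
  field_simp
  ring

lemma Gfun'_hasDeriv {x : ℝ} (hx0 : 0 < x) (hx1 : x < 1) : HasDerivAt Gfun' (Gfun'' x) x := by
  have hu : 0 < x * (1-x) := by nlinarith
  have hsu : 0 < Real.sqrt (x*(1-x)) := Real.sqrt_pos.mpr hu
  have hsq : Real.sqrt (x*(1-x)) ^ 2 = x*(1-x) := Real.sq_sqrt hu.le
  have h1 : HasDerivAt (fun x : ℝ => x*(1-x)) (1-2*x) x := by
    have := (hasDerivAt_id x).mul ((hasDerivAt_const x (1:ℝ)).sub (hasDerivAt_id x))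
    exact this.congr_deriv (by simp only [id, Pi.sub_apply]; ring)
  have h2 : HasDerivAt (fun x : ℝ => Real.sqrt (x*(1-x))) ((1-2*x)/(2*Real.sqrt (x*(1-x)))) x :=
    h1.sqrt hu.ne'
  have hnum : HasDerivAt (fun x : ℝ => Real.log 2 * (1-2*x)) (Real.log 2 * (-2)) x := by
    have : HasDerivAt (fun x : ℝ => 1-2*x) (-2) x := by
      exact ((hasDerivAt_const x (1:ℝ)).sub ((hasDerivAt_id x).const_mul 2)).congr_deriv (by ring)
    simpa [mul_comm] using this.const_mul (Real.log 2)
  have h3 : HasDerivAt (fun x : ℝ => Real.log 2 * (1-2*x) / Real.sqrt (x*(1-x)))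
      ((Real.log 2 * (-2) * Real.sqrt (x*(1-x)) -
        Real.log 2 * (1-2*x) * ((1-2*x)/(2*Real.sqrt (x*(1-x))))) / (Real.sqrt (x*(1-x)))^2) x :=
    hnum.div h2 hsu.ne'
  have h4 : HasDerivAt (fun x : ℝ => 1 - x) (-1) x := by
    exact (hasDerivAt_id x).const_sub 1
  have h5 : HasDerivAt (fun x : ℝ => Real.log x - Real.log (1-x)) (x⁻¹ - (1-x)⁻¹ * (-1)) x := by
    refine (Real.hasDerivAt_log hx0.ne').sub ?_
    have := (Real.hasDerivAt_log (x := 1-x) (by linarith)).comp x h4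
    exact this
  have := h3.add h5
  refine this.congr_deriv ?_
  symm
  unfold Gfun''
  have h6 : (1:ℝ)-x ≠ 0 := by linarith
  have hinv : x⁻¹ - (1-x)⁻¹ * (-1) = 1/(x*(1-x)) := by field_simp; ring
  rw [hinv]
  set S := Real.sqrt (x*(1-x)) with hSdef
  have hS2 : S^2 = x*(1-x) := hsq
  have hSpos : 0 < S := hsu
  rw [div_add' _ _ _ (by positivity), div_eq_div_iff (by positivity) (by positivity)]
  field_simp
  linear_combination (4*Real.log 2*(x*(1-x)) - Real.log 2) * hS2

lemma Gfun_symm (x : ℝ) : Gfun (1-x) = Gfun x := by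
  unfold Gfun
  have : (1-x) * (1-(1-x)) = x*(1-x) := by ring
  rw [this]
  ring_nf

lemma Gfun_half : Gfun (1/2) = 0 := by
  unfold Gfun
  have h1 : (1:ℝ)/2*(1-1/2) = (1/2)^2 := by norm_num
  rw [h1, Real.sqrt_sq (by norm_num)]
  have h2 : Real.log (1-1/2 : ℝ) = - Real.log 2 := by
    rw [show (1:ℝ)-1/2 = 2⁻¹ by norm_num, Real.log_inv]
  have h3 : Real.log (1/2 : ℝ) = - Real.log 2 := by
    rw [show (1:ℝ)/2 = 2⁻¹ by norm_num, Real.log_inv]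
  rw [h2, h3]
  ring

lemma Gfun_zero : Gfun 0 = 0 := by
  unfold Gfun
  norm_num

-- the threshold
noncomputable def Gx₀ : ℝ := (1 - Real.sqrt (1 - Real.log 2 ^ 2)) / 2

lemma log2_lt_one : Real.log 2 < 1 := by
  have := Real.log_two_lt_d9
  linarith

lemma Gr_pos : 0 < Real.sqrt (1 - Real.log 2 ^ 2) := by
  apply Real.sqrt_pos.mpr
  have h1 := Real.log_pos (by norm_num : (1:ℝ) < 2)
  nlinarith [log2_lt_one]

lemma Gr_lt_one : Real.sqrt (1 - Real.log 2 ^ 2) < 1 := by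
  have h1 := Real.log_pos (by norm_num : (1:ℝ) < 2)
  nlinarith [Real.sq_sqrt (by nlinarith [log2_lt_one] : (0:ℝ) ≤ 1 - Real.log 2 ^ 2),
    Real.sqrt_nonneg (1 - Real.log 2 ^ 2)]

lemma Gx₀_pos : 0 < Gx₀ := by unfold Gx₀; linarith [Gr_lt_one]

lemma Gx₀_lt_half : Gx₀ < 1/2 := by unfold Gx₀; linarith [Gr_pos]

lemma Gx₀_mul : Gx₀ * (1 - Gx₀) = Real.log 2 ^ 2 / 4 := by
  unfold Gx₀
  have h1 := Real.sq_sqrt (by nlinarith [log2_lt_one, Real.log_pos (by norm_num : (1:ℝ) < 2)]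
    : (0:ℝ) ≤ 1 - Real.log 2 ^ 2)
  nlinarith [h1]

lemma Gfun_nonneg_mid {x : ℝ} (hx : x ∈ Set.Icc Gx₀ (1 - Gx₀)) : 0 ≤ Gfun x := by
  have hc := Real.log_pos (by norm_num : (1:ℝ) < 2)
  have hsub : Set.Icc Gx₀ (1-Gx₀) ⊆ Set.Icc (0:ℝ) 1 := by
    apply Set.Icc_subset_Icc <;> linarith [Gx₀_pos, Gx₀_lt_half]
  have hconv : ConvexOn ℝ (Set.Icc Gx₀ (1-Gx₀)) Gfun := by
    apply convexOn_of_hasDerivWithinAt2_nonneg (convex_Icc _ _) Gfun_cont.continuousOn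
      (f' := Gfun') (f'' := Gfun'')
    · rw [interior_Icc]
      intro y hy
      exact (Gfun_hasDeriv (by linarith [hy.1, Gx₀_pos]) (by linarith [hy.2, Gx₀_pos])).hasDerivWithinAt
    · rw [interior_Icc]
      intro y hy
      exact (Gfun'_hasDeriv (by linarith [hy.1, Gx₀_pos]) (by linarith [hy.2, Gx₀_pos])).hasDerivWithinAt
    · rw [interior_Icc]
      intro y hy
      have hy0 : 0 < y := by linarith [hy.1, Gx₀_pos]
      have hy1 : y < 1 := by linarith [hy.2, Gx₀_pos]
      have hu : 0 < y*(1-y) := by nlinarith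
      have hu' : Real.log 2 ^2 / 4 ≤ y*(1-y) := by
        nlinarith [Gx₀_mul, hy.1, hy.2]
      have hnum : Real.log 2 ≤ 2 * Real.sqrt (y*(1-y)) := by
        nlinarith [Real.sq_sqrt hu.le, Real.sqrt_nonneg (y*(1-y)),
          sq_nonneg (2*Real.sqrt (y*(1-y)) - Real.log 2)]
      unfold Gfun''
      apply div_nonneg (by linarith) (by positivity)
  -- midpoint + symmetry
  have hx' : (1-x) ∈ Set.Icc Gx₀ (1-Gx₀) := by
    constructor <;> [linarith [hx.2]; linarith [hx.1]]
  have hmid := hconv.2 hx hx' (by norm_num : (0:ℝ) ≤ 1/2) (by norm_num : (0:ℝ) ≤ 1/2)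
    (by norm_num)
  have heq : (1/2 : ℝ) • x + (1/2 : ℝ) • (1-x) = 1/2 := by
    simp [smul_eq_mul]; ring
  rw [heq, Gfun_half, Gfun_symm] at hmid
  simp [smul_eq_mul] at hmid
  linarith

lemma Gfun_nonneg {x : ℝ} (hx : x ∈ Set.Icc (0:ℝ) 1) : 0 ≤ Gfun x := by
  have hx₀pos := Gx₀_pos
  have hx₀lt := Gx₀_lt_half
  -- concavity on [0, Gx₀]
  have hconc : ConcaveOn ℝ (Set.Icc (0:ℝ) Gx₀) Gfun := by
    have hneg : ConvexOn ℝ (Set.Icc (0:ℝ) Gx₀) (fun y => -Gfun y) := by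
      apply convexOn_of_hasDerivWithinAt2_nonneg (convex_Icc _ _)
        (Gfun_cont.neg.continuousOn) (f' := fun y => -Gfun' y) (f'' := fun y => -Gfun'' y)
      · rw [interior_Icc]
        intro y hy
        exact ((Gfun_hasDeriv hy.1 (by linarith [hy.2])).neg).hasDerivWithinAt
      · rw [interior_Icc]
        intro y hy
        exact ((Gfun'_hasDeriv hy.1 (by linarith [hy.2])).neg).hasDerivWithinAt
      · rw [interior_Icc]
        intro y hy
        have hy0 : 0 < y := hy.1
        have hy1 : y < 1 := by linarith [hy.2]
        have hu : 0 < y*(1-y) := by nlinarith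
        have hu' : y*(1-y) ≤ Real.log 2 ^2 / 4 := by
          nlinarith [Gx₀_mul, hy.1, hy.2]
        have hnum : 2 * Real.sqrt (y*(1-y)) ≤ Real.log 2 := by
          have h1 : Real.sqrt (y*(1-y)) ≤ Real.sqrt (Real.log 2 ^2/4) := Real.sqrt_le_sqrt hu'
          have h2 : Real.sqrt (Real.log 2^2/4) = Real.log 2 / 2 := by
            rw [show Real.log 2^2/4 = (Real.log 2/2)^2 by ring]
            exact Real.sqrt_sq (by linarith [Real.log_nonneg (by norm_num : (1:ℝ) ≤ 2)])
          rw [h2] at h1; linarith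
        simp only [neg_nonneg]
        unfold Gfun''
        apply div_nonpos_of_nonpos_of_nonneg (by linarith) (by positivity)
    have h' := hneg.neg
    exact h'.congr (fun y _ => by simp)
  rcases le_or_gt x Gx₀ with h1 | h1
  · -- x ∈ [0, Gx₀]: concave, endpoints nonneg
    have hG0 : (0:ℝ) ≤ Gfun 0 := le_of_eq Gfun_zero.symm
    have hGx₀ : 0 ≤ Gfun Gx₀ := Gfun_nonneg_mid ⟨le_refl _, by linarith⟩
    have ht : x = (1 - x/Gx₀) • (0:ℝ) + (x/Gx₀) • Gx₀ := by
      rw [smul_eq_mul, smul_eq_mul]; field_simp; ring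
    have := hconc.2 (Set.left_mem_Icc.mpr hx₀pos.le) (Set.right_mem_Icc.mpr hx₀pos.le)
      (show (0:ℝ) ≤ 1 - x/Gx₀ by have : x/Gx₀ ≤ 1 := (div_le_one hx₀pos).mpr h1; linarith)
      (show (0:ℝ) ≤ x/Gx₀ from div_nonneg hx.1 hx₀pos.le)
      (show 1 - x/Gx₀ + x/Gx₀ = 1 by ring)
    rw [← ht] at this
    simp only [smul_eq_mul] at this
    have hb : 0 ≤ x/Gx₀ := div_nonneg hx.1 hx₀pos.le
    have ha : (0:ℝ) ≤ 1 - x/Gx₀ := by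
      have : x/Gx₀ ≤ 1 := (div_le_one hx₀pos).mpr h1
      linarith
    nlinarith [mul_nonneg ha hG0, mul_nonneg hb hGx₀]
  rcases le_or_gt x (1-Gx₀) with h2 | h2
  · exact Gfun_nonneg_mid ⟨h1.le, h2⟩
  · -- x ∈ (1-Gx₀, 1]: use symmetry
    rw [← Gfun_symm]
    have h1x : (1-x) ∈ Set.Icc (0:ℝ) Gx₀ := ⟨by linarith [hx.2], by linarith⟩
    have hG0 : (0:ℝ) ≤ Gfun 0 := le_of_eq Gfun_zero.symm
    have hGx₀ : 0 ≤ Gfun Gx₀ := Gfun_nonneg_mid ⟨le_refl _, by linarith⟩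
    set y := 1 - x with hy
    have ht : y = (1 - y/Gx₀) • (0:ℝ) + (y/Gx₀) • Gx₀ := by
      rw [smul_eq_mul, smul_eq_mul]; field_simp; ring
    have := hconc.2 (Set.left_mem_Icc.mpr hx₀pos.le) (Set.right_mem_Icc.mpr hx₀pos.le)
      (show (0:ℝ) ≤ 1 - y/Gx₀ by have : y/Gx₀ ≤ 1 := (div_le_one hx₀pos).mpr h1x.2; linarith)
      (show (0:ℝ) ≤ y/Gx₀ from div_nonneg h1x.1 hx₀pos.le)
      (show 1 - y/Gx₀ + y/Gx₀ = 1 by ring)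
    rw [← ht] at this
    simp only [smul_eq_mul] at this
    have hb : 0 ≤ y/Gx₀ := div_nonneg h1x.1 hx₀pos.le
    have ha : (0:ℝ) ≤ 1 - y/Gx₀ := by
      have : y/Gx₀ ≤ 1 := (div_le_one hx₀pos).mpr h1x.2
      linarith
    nlinarith [mul_nonneg ha hG0, mul_nonneg hb hGx₀]

lemma binEntropy_le_sqrt {x : ℝ} (hx : x ∈ Set.Icc (0:ℝ) 1) :
    Real.binEntropy x ≤ 2 * Real.log 2 * Real.sqrt (x*(1-x)) := by
  have h := Gfun_nonneg hx
  have heq : Real.binEntropy x = 2 * Real.log 2 * Real.sqrt (x*(1-x)) - Gfun x := by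
    unfold Gfun
    rw [Real.binEntropy, Real.log_inv, Real.log_inv]
    ring
  linarith [h, heq]

open Finset in
lemma entropy_support_le {d : ℕ} (w : Fin d → ℝ) (hnn : ∀ i, 0 ≤ w i)
    (hsum : ∑ i, w i = 1) (q : ℝ) (hq : 0 ≤ q) (hsq : ∑ i, (w i)^2 = 1 - 2*q)
    (hcard : (Finset.univ.filter (fun i => w i ≠ 0)).card ≤ 2) :
    ∑ i, -(w i * Real.logb 2 (w i)) ≤ 2 * Real.sqrt q := by
  classical
  set s := Finset.univ.filter (fun i => w i ≠ 0) with hs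
  have h0 : ∀ i ∈ Finset.univ, i ∉ s → w i = 0 := by
    intro i _ hi
    by_contra h
    exact hi (by simp [hs, h])
  have hsum_s : ∑ i ∈ s, w i = 1 := by
    rw [← hsum]
    exact Finset.sum_subset (Finset.subset_univ s) h0
  have hsq_s : ∑ i ∈ s, (w i)^2 = 1 - 2*q := by
    rw [← hsq]
    exact Finset.sum_subset (Finset.subset_univ s) (fun i h1 h2 => by rw [h0 i h1 h2]; ring)
  have hent : ∑ i, -(w i * Real.logb 2 (w i)) = ∑ i ∈ s, -(w i * Real.logb 2 (w i)) :=
    (Finset.sum_subset (Finset.subset_univ s) (fun i h1 h2 => by rw [h0 i h1 h2]; ring)).symm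
  rw [hent]
  have hrhs : 0 ≤ 2 * Real.sqrt q := by positivity
  interval_cases hc : s.card
  · rw [Finset.card_eq_zero.mp hc] at hsum_s
    simp at hsum_s
  · obtain ⟨i, hi⟩ := Finset.card_eq_one.mp hc
    rw [hi] at hsum_s ⊢
    simp at hsum_s
    simp [hsum_s, hrhs]
  · obtain ⟨i, j, hij, hij2⟩ := Finset.card_eq_two.mp hc
    rw [hij2] at hsum_s hsq_s ⊢
    rw [Finset.sum_pair hij] at hsum_s hsq_s ⊢
    set a := w i
    set b := w j
    have ha0 : 0 ≤ a := hnn i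
    have hb0 : 0 ≤ b := hnn j
    have hb : b = 1 - a := by linarith
    have hab : a * (1-a) = q := by nlinarith
    have ha1 : a ≤ 1 := by linarith
    have hlog2 : (0:ℝ) < Real.log 2 := Real.log_pos (by norm_num)
    have hent2 : -(a * Real.logb 2 a) + -(b * Real.logb 2 b) = Real.binEntropy a / Real.log 2 := by
      rw [hb, Real.binEntropy, Real.log_inv, Real.log_inv, Real.logb, Real.logb]
      field_simp
    rw [hent2]
    have hkey := binEntropy_le_sqrt (Set.mem_Icc.mpr ⟨ha0, ha1⟩)
    rw [hab] at hkey
    rw [div_le_iff₀ hlog2]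
    linarith [hkey]

open scoped InnerProductSpace in
lemma trace_outer {d : ℕ} (x : EuclideanSpace ℂ (Fin d)) :
    (Matrix.of fun i j => x i * (starRingEnd ℂ) (x j)).trace = ⟪x, x⟫_ℂ := by
  simp only [Matrix.trace, Matrix.diag, Matrix.of_apply, PiLp.inner_apply, RCLike.inner_apply]

open scoped InnerProductSpace in
lemma trace_outer_mul {d : ℕ} (x y : EuclideanSpace ℂ (Fin d)) :
    ((Matrix.of fun i j => x i * (starRingEnd ℂ) (x j)) *
     (Matrix.of fun i j => y i * (starRingEnd ℂ) (y j))).trace = ⟪x, y⟫_ℂ * ⟪y, x⟫_ℂ := by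
  simp only [Matrix.trace, Matrix.diag, Matrix.mul_apply, Matrix.of_apply, PiLp.inner_apply,
    RCLike.inner_apply]
  rw [Finset.sum_mul_sum]
  rw [Finset.sum_comm]
  refine Finset.sum_congr rfl (fun i _ => ?_)
  exact Finset.sum_congr rfl (fun j _ => by ring)

lemma trace_eq_sum_eigs {d : ℕ} {ρ : Matrix (Fin d) (Fin d) ℂ} (hherm : ρ.IsHermitian) :
    ρ.trace = ∑ i, (hherm.eigenvalues i : ℂ) := by
  conv_lhs => rw [hherm.spectral_theorem, Unitary.conjStarAlgAut_apply]
  rw [Matrix.trace_mul_cycle]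
  rw [Matrix.mem_unitaryGroup_iff'.mp (hherm.eigenvectorUnitary).2, Matrix.one_mul,
    Matrix.trace_diagonal]
  rfl

lemma trace_sq_eq_sum_eigs_sq {d : ℕ} {ρ : Matrix (Fin d) (Fin d) ℂ} (hherm : ρ.IsHermitian) :
    (ρ * ρ).trace = ∑ i, ((hherm.eigenvalues i : ℂ))^2 := by
  set V : Matrix (Fin d) (Fin d) ℂ := (hherm.eigenvectorUnitary : Matrix (Fin d) (Fin d) ℂ)
  have hU : star V * V = 1 := Matrix.mem_unitaryGroup_iff'.mp (hherm.eigenvectorUnitary).2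
  set D : Matrix (Fin d) (Fin d) ℂ :=
    Matrix.diagonal (RCLike.ofReal ∘ hherm.eigenvalues) with hD
  have hspec : ρ = V * D * star V := by
    have := hherm.spectral_theorem; rwa [Unitary.conjStarAlgAut_apply] at this
  have hmul : ρ * ρ = V * (D * D) * star V := by
    rw [hspec, Matrix.mul_assoc (V*D), ← Matrix.mul_assoc (star V) (V*D) (star V),
      ← Matrix.mul_assoc (star V) V D, hU, Matrix.one_mul]
    simp only [Matrix.mul_assoc]
  rw [hmul, Matrix.trace_mul_cycle, hU, Matrix.one_mul, hD, Matrix.diagonal_mul_diagonal,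
    Matrix.trace_diagonal]
  refine Finset.sum_congr rfl (fun i _ => ?_)
  simp [pow_two]

open scoped InnerProductSpace
open scoped ComplexOrder

theorem vonNeumann_entropy_of_binary_pure_mixture_le
    {d : ℕ} (φ0 φ1 : EuclideanSpace ℂ (Fin d)) (h0 : ‖φ0‖ = 1) (h1 : ‖φ1‖ = 1)
    (θ : ℝ) (hθ : θ ∈ Set.Icc 0 (Real.pi / 2))
    (hip : ‖⟪φ0, φ1⟫_ℂ‖ = Real.cos θ)
    (p : ℝ) (hp : p ∈ Set.Icc (0:ℝ) 1)
    (ρ : Matrix (Fin d) (Fin d) ℂ)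
    (hρ : ρ = (p : ℂ) • Matrix.of (fun i j => φ0 i * (starRingEnd ℂ) (φ0 j)) +
              ((1 - p : ℝ) : ℂ) • Matrix.of (fun i j => φ1 i * (starRingEnd ℂ) (φ1 j)))
    (hherm : ρ.IsHermitian) :
    (∑ i, -(hherm.eigenvalues i * Real.logb 2 (hherm.eigenvalues i))) ≤
      2 * Real.sqrt (p * (1-p)) * Real.sin θ := by
  obtain ⟨hθ0, hθπ⟩ := hθ
  obtain ⟨hp0, hp1⟩ := hp
  have hp1' : (0:ℝ) ≤ 1 - p := by linarith
  set w := hherm.eigenvalues with hw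
  set M : Matrix (Fin d) (Fin 2) ℂ := Matrix.of (fun i k =>
    if k = 0 then (Real.sqrt p : ℂ) * φ0 i else (Real.sqrt (1-p) : ℂ) * φ1 i) with hM
  have e0 : (Real.sqrt p : ℂ) * (Real.sqrt p : ℂ) = (p:ℂ) := by
    rw [← Complex.ofReal_mul, Real.mul_self_sqrt hp0]
  have e1 : (Real.sqrt (1-p) : ℂ) * (Real.sqrt (1-p) : ℂ) = ((1-p:ℝ):ℂ) := by
    rw [← Complex.ofReal_mul, Real.mul_self_sqrt hp1']
  have hMρ : M * M.conjTranspose = ρ := by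
    rw [hρ]
    ext i j
    simp only [hM, Matrix.mul_apply, Matrix.conjTranspose_apply, Matrix.of_apply,
      Fin.sum_univ_two, Matrix.add_apply, Matrix.smul_apply, smul_eq_mul,
      star_mul', Complex.star_def, Complex.conj_ofReal]
    norm_num
    push_cast at e1 ⊢
    linear_combination (φ0 i * (starRingEnd ℂ) (φ0 j)) * e0 +
      (φ1 i * (starRingEnd ℂ) (φ1 j)) * e1
  have hpsd : ρ.PosSemidef := hMρ ▸ Matrix.posSemidef_self_mul_conjTranspose M
  have hnn : ∀ i, 0 ≤ w i := fun i => hpsd.eigenvalues_nonneg i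
  have hrank : ρ.rank ≤ 2 := by
    rw [← hMρ, Matrix.rank_self_mul_conjTranspose]
    calc M.rank ≤ Fintype.card (Fin 2) := M.rank_le_card_width
    _ = 2 := by simp
  have hcard : (Finset.univ.filter (fun i => w i ≠ 0)).card ≤ 2 := by
    rw [hherm.rank_eq_card_non_zero_eigs, Fintype.card_subtype] at hrank
    exact hrank
  have hip2 : ⟪φ0, φ1⟫_ℂ * ⟪φ1, φ0⟫_ℂ = (((Real.cos θ)^2 : ℝ) : ℂ) := by
    have hconj : ⟪φ1, φ0⟫_ℂ = (starRingEnd ℂ) ⟪φ0, φ1⟫_ℂ := (inner_conj_symm _ _).symm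
    rw [hconj, Complex.mul_conj, ← Complex.sq_norm, hip]
  have htr : ρ.trace = 1 := by
    rw [hρ]
    simp only [Matrix.trace_add, Matrix.trace_smul, trace_outer, smul_eq_mul]
    rw [inner_self_eq_norm_sq_to_K, inner_self_eq_norm_sq_to_K, h0, h1]
    push_cast
    ring
  have hsum : ∑ i, w i = 1 := by
    have h := trace_eq_sum_eigs hherm
    rw [htr] at h
    have h2 : ((∑ i, w i : ℝ) : ℂ) = ((1:ℝ):ℂ) := by
      push_cast
      rw [← h]
    exact_mod_cast h2
  have htr2 : (ρ*ρ).trace = ((p^2 + (1-p)^2 + 2*p*(1-p)*(Real.cos θ)^2 : ℝ) : ℂ) := by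
    rw [hρ, add_mul, mul_add, mul_add]
    simp only [Matrix.smul_mul, Matrix.mul_smul, Matrix.trace_add, Matrix.trace_smul,
      trace_outer_mul, smul_eq_mul]
    rw [inner_self_eq_norm_sq_to_K, inner_self_eq_norm_sq_to_K, h0, h1, hip2,
      mul_comm (⟪φ1, φ0⟫_ℂ) (⟪φ0, φ1⟫_ℂ), hip2]
    push_cast
    ring
  have hsq : ∑ i, (w i)^2 = p^2+(1-p)^2+2*p*(1-p)*(Real.cos θ)^2 := by
    have h := trace_sq_eq_sum_eigs_sq hherm
    rw [htr2] at h
    have h2 : ((∑ i, (w i)^2 : ℝ) : ℂ) = ((p^2+(1-p)^2+2*p*(1-p)*(Real.cos θ)^2 : ℝ) : ℂ) := by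
      push_cast
      push_cast at h
      rw [← h]
    exact_mod_cast h2
  set q := p*(1-p)*(Real.sin θ)^2 with hqdef
  have hq0 : 0 ≤ q := by
    apply mul_nonneg (mul_nonneg hp0 hp1') (sq_nonneg _)
  have hsq' : ∑ i, (w i)^2 = 1 - 2*q := by
    rw [hsq, hqdef]
    nlinarith [Real.sin_sq_add_cos_sq θ]
  have hmain := entropy_support_le w hnn hsum q hq0 hsq' hcard
  have hsin : 0 ≤ Real.sin θ :=
    Real.sin_nonneg_of_nonneg_of_le_pi hθ0 (by linarith [Real.pi_pos])
  have hsqrt : Real.sqrt q = Real.sqrt (p*(1-p)) * Real.sin θ := by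
    rw [hqdef, Real.sqrt_mul (mul_nonneg hp0 hp1'), Real.sqrt_sq hsin]
  calc (∑ i, -(w i * Real.logb 2 (w i))) ≤ 2 * Real.sqrt q := hmain
  _ = 2 * Real.sqrt (p * (1-p)) * Real.sin θ := by rw [hsqrt]; ring
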